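/- Let g : [0,1] → ℝ be ACG* with D₊g(t) = h(t) for almost every t, where h is HK-integrable. If f : [0,1] → ℝ is ACG and D₊f(t) ≤ D₊g(t) with D₊g(t) finite for almost all t ∈ [0,1], then f(1) − f(0) ≤ g(1) − g(0). -/

import Mathlib

open Filter Set Topology MeasureTheory

/-- Lower right Dini derivative of a real-valued function. -/
noncomputable def DlowR (φ : ℝ → ℝ) (t : ℝ) : EReal :=
  Filter.liminf (fun s : ℝ => (((φ (t + s) - φ t) / s : ℝ) : EReal))
    (nhdsWithin 0 (Set.Ioi 0))

/-- Oscillation of `φ` on the interval `[c,d]`. -/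
noncomputable def osc (φ : ℝ → ℝ) (c d : ℝ) : ℝ :=
  sSup {r | ∃ x y : ℝ, c ≤ x ∧ x ≤ y ∧ y ≤ d ∧ r = |φ y - φ x|}

/-- A finite family of intervals `[c i, d i]` is non-overlapping with endpoints in `S`. -/
def GoodIntervals (S : Set ℝ) {n : ℕ} (c d : Fin n → ℝ) : Prop :=
  (∀ i, c i ∈ S ∧ d i ∈ S ∧ c i ≤ d i) ∧
    Pairwise fun i j => d i ≤ c j ∨ d j ≤ c i

/-- `φ` is absolutely continuous (AC) on `S`. -/
def FnAC (φ : ℝ → ℝ) (S : Set ℝ) : Prop :=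
  ∀ ε > 0, ∃ δ > 0, ∀ (n : ℕ) (c d : Fin n → ℝ),
    GoodIntervals S c d → (∑ i, (d i - c i)) < δ →
      (∑ i, |φ (d i) - φ (c i)|) < ε

/-- `φ` is absolutely continuous in the restricted sense (AC*) on `S`. -/
def FnACstar (φ : ℝ → ℝ) (S : Set ℝ) : Prop :=
  ∀ ε > 0, ∃ δ > 0, ∀ (n : ℕ) (c d : Fin n → ℝ),
    GoodIntervals S c d → (∑ i, (d i - c i)) < δ →
      (∑ i, osc φ (c i) (d i)) < ε

/-- `φ` is generalized absolutely continuous (ACG) on `[a,b]`. -/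
def FnACG (φ : ℝ → ℝ) (a b : ℝ) : Prop :=
  ContinuousOn φ (Set.Icc a b) ∧
    ∃ S : ℕ → Set ℝ, (⋃ n, S n) = Set.Icc a b ∧ ∀ n, FnAC φ (S n)

/-- `φ` is generalized absolutely continuous in the restricted sense (ACG*) on `[a,b]`. -/
def FnACGstar (φ : ℝ → ℝ) (a b : ℝ) : Prop :=
  ContinuousOn φ (Set.Icc a b) ∧
    ∃ S : ℕ → Set ℝ, (⋃ n, S n) = Set.Icc a b ∧ ∀ n, FnACstar φ (S n)

/-- `f` has Henstock–Kurzweil integral `I` on `[a,b]`. -/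
def HasHKIntegral (f : ℝ → ℝ) (a b I : ℝ) : Prop :=
  ∀ ε > 0, ∃ δ : ℝ → ℝ, (∀ t ∈ Set.Icc a b, 0 < δ t) ∧
    ∀ (n : ℕ) (x : Fin (n + 1) → ℝ) (t : Fin n → ℝ),
      Monotone x → x 0 = a → x (Fin.last n) = b →
      (∀ i : Fin n, t i ∈ Set.Icc (x i.castSucc) (x i.succ)) →
      (∀ i : Fin n, x i.succ - x i.castSucc < δ (t i)) →
      |(∑ i : Fin n, f (t i) * (x i.succ - x i.castSucc)) - I| < ε

lemma keta_aux (k : ℕ) (ε : ℝ) (hε : 0 < ε) : (k:ℝ) * (ε/(8*((k:ℝ)+1))) ≤ ε/8 := by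
  have hknn : (0:ℝ) ≤ (k:ℝ) := Nat.cast_nonneg k
  rw [← mul_div_assoc, div_le_div_iff₀ (by positivity) (by norm_num)]
  nlinarith

set_option maxHeartbeats 1000000 in
open Classical in
lemma lusinN (φ : ℝ → ℝ) (S A : Set ℝ) (M : ℝ)
    (hM : ∀ x ∈ S, |φ x| ≤ M)
    (hAC : FnAC φ S) (hAS : A ⊆ S) (hA : volume A = 0) :
    volume (φ '' A) = 0 := by
  -- reduce to showing the measure is ≤ ofReal ε for every ε > 0
  refine le_antisymm ?_ (zero_le (a := volume (φ '' A)))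
  have key : ∀ ε : ℝ, 0 < ε → volume (φ '' A) ≤ ENNReal.ofReal ε := by
    intro ε hε
    obtain ⟨δ, hδ, hACδ⟩ := hAC (ε/8) (by positivity)
    obtain ⟨U, hAU, hUopen, hUvol⟩ :=
      Set.exists_isOpen_lt_of_lt A (ENNReal.ofReal δ)
        (by rw [hA]; exact ENNReal.ofReal_pos.2 hδ)
    -- enumerate rationals
    set e : ℕ → ℚ := fun n => (Denumerable.eqv ℚ).symm n with he
    set C : ℕ → Set ℝ := fun n => connectedComponentIn U ((e n : ℝ)) with hC
    set C' : ℕ → Set ℝ := fun n => if ∃ m < n, C m = C n then ∅ else C n with hC'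
    have hC'sub : ∀ n, C' n ⊆ C n := by
      intro n; simp only [hC']; split <;> simp
    have hC'U : ∀ n, C' n ⊆ U := fun n =>
      (hC'sub n).trans (connectedComponentIn_subset _ _)
    -- cover
    have hcover : A ⊆ ⋃ n, C' n := by
      intro x hx
      have hxU : x ∈ U := hAU hx
      have hcomp_open : IsOpen (connectedComponentIn U x) := hUopen.connectedComponentIn
      have hxcomp : x ∈ connectedComponentIn U x := mem_connectedComponentIn hxU
      -- find a rational in the component
      obtain ⟨r, hr, hball⟩ := Metric.isOpen_iff.1 hcomp_open x hxcomp
      obtain ⟨q, hq1, hq2⟩ := exists_rat_btwn (show x - r < x + r by linarith)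
      have hqcomp : (q : ℝ) ∈ connectedComponentIn U x := by
        apply hball
        rw [Metric.mem_ball, Real.dist_eq, abs_lt]
        constructor <;> linarith
      set n₀ := (Denumerable.eqv ℚ) q with hn₀
      have hen₀ : e n₀ = q := by rw [he, hn₀]; simp
      have hCn₀ : C n₀ = connectedComponentIn U x := by
        rw [hC]; simp only [hen₀]
        exact (connectedComponentIn_eq hqcomp).symm
      have hex : ∃ n, C n = C n₀ := ⟨n₀, rfl⟩
      set n₁ := Nat.find hex with hn₁
      have hCn₁ : C n₁ = C n₀ := Nat.find_spec hex
      have hxC' : x ∈ C' n₁ := by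
        simp only [hC']
        have : ¬ ∃ m < n₁, C m = C n₁ := by
          rintro ⟨m, hm, hmeq⟩
          exact absurd (hmeq.trans hCn₁) (Nat.find_min hex hm)
        rw [if_neg this, hCn₁, hCn₀]; exact hxcomp
      exact mem_iUnion.2 ⟨n₁, hxC'⟩
    -- pairwise disjoint
    have hdisj : ∀ m n, m ≠ n → Disjoint (C' m) (C' n) := by
      have key : ∀ m n, m < n → Disjoint (C' m) (C' n) := by
        intro m n hmn
        rw [Set.disjoint_left]
        intro z hzm hzn
        have hzCm : z ∈ C m := hC'sub m hzm
        have hzCn : z ∈ C n := hC'sub n hzn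
        have h1 : C m = connectedComponentIn U z := connectedComponentIn_eq hzCm
        have h2 : C n = connectedComponentIn U z := connectedComponentIn_eq hzCn
        have heq : C m = C n := h1.trans h2.symm
        have : C' n = ∅ := by simp only [hC']; exact if_pos ⟨m, hmn, heq⟩
        rw [this] at hzn; exact hzn
      intro m n hmn
      rcases lt_or_gt_of_ne hmn with h | h
      · exact key m n h
      · exact (key n m h).symm
    -- main estimate
    have himg : φ '' A ⊆ ⋃ n, φ '' (A ∩ C' n) := by
      rintro _ ⟨x, hx, rfl⟩
      obtain ⟨n, hn⟩ := mem_iUnion.1 (hcover hx)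
      exact mem_iUnion.2 ⟨n, ⟨x, ⟨hx, hn⟩, rfl⟩⟩
    refine le_trans (measure_mono himg) ?_
    refine le_trans (measure_iUnion_le _) ?_
    rw [ENNReal.tsum_eq_iSup_sum]
    refine iSup_le fun F => ?_
    -- finite sum estimate
    set T := F.filter (fun n => (A ∩ C' n).Nonempty) with hT
    have hsumT : ∑ n ∈ F, volume (φ '' (A ∩ C' n)) = ∑ n ∈ T, volume (φ '' (A ∩ C' n)) := by
      refine (Finset.sum_subset (Finset.filter_subset _ _) ?_).symm
      intro n hnF hnT
      have : A ∩ C' n = ∅ := by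
        by_contra hne
        exact hnT (Finset.mem_filter.2 ⟨hnF, Set.nonempty_iff_ne_empty.2 hne⟩)
      rw [this]; simp
    rw [hsumT]
    set k := T.card with hk
    set η := ε / (8 * (k + 1)) with hη
    have hηpos : 0 < η := by positivity
    have hpick : ∀ n ∈ T, (A ∩ C' n).Nonempty := fun n hn => (Finset.mem_filter.1 hn).2
    set R : ℕ → Set ℝ := fun n => {r | ∃ x ∈ S ∩ C' n, ∃ y ∈ S ∩ C' n, r = |φ y - φ x|} with hR
    have hRbdd : ∀ n, BddAbove (R n) := by
      intro n
      refine ⟨M + M, ?_⟩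
      rintro r ⟨x, hx, y, hy, rfl⟩
      calc |φ y - φ x| ≤ |φ y| + |φ x| := abs_sub _ _
        _ ≤ M + M := add_le_add (hM y hy.1) (hM x hx.1)
    set rr : ℕ → ℝ := fun n => sSup (R n) with hrr
    have hRmem0 : ∀ n ∈ T, (0:ℝ) ∈ R n := by
      intro n hn
      obtain ⟨x₀, hx₀⟩ := hpick n hn
      exact ⟨x₀, ⟨hAS hx₀.1, hx₀.2⟩, x₀, ⟨hAS hx₀.1, hx₀.2⟩, by simp⟩
    have hrr0 : ∀ n ∈ T, 0 ≤ rr n := fun n hn => le_csSup (hRbdd n) (hRmem0 n hn)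
    -- Step 1 : image measure bound
    have hstep1 : ∀ n ∈ T, volume (φ '' (A ∩ C' n)) ≤ ENNReal.ofReal (2 * rr n) := by
      intro n hn
      obtain ⟨x₀, hx₀⟩ := hpick n hn
      have himg : φ '' (A ∩ C' n) ⊆ Icc (φ x₀ - rr n) (φ x₀ + rr n) := by
        rintro _ ⟨y, hy, rfl⟩
        have : |φ y - φ x₀| ≤ rr n :=
          le_csSup (hRbdd n) ⟨x₀, ⟨hAS hx₀.1, hx₀.2⟩, y, ⟨hAS hy.1, hy.2⟩, rfl⟩
        rw [abs_sub_le_iff] at this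
        constructor <;> linarith [this.1, this.2]
      refine le_trans (measure_mono himg) ?_
      rw [Real.volume_Icc]
      exact ENNReal.ofReal_le_ofReal (by ring_nf; simp)
    -- choose interval endpoints for each element of T
    have hchoice : ∀ j : Fin k, ∃ cd : ℝ × ℝ,
        cd.1 ∈ S ∩ C' ((T.equivFin.symm j : ℕ)) ∧ cd.2 ∈ S ∩ C' ((T.equivFin.symm j : ℕ)) ∧
        cd.1 ≤ cd.2 ∧ rr ((T.equivFin.symm j : ℕ)) - η < |φ cd.2 - φ cd.1| := by
      intro j
      set n := ((T.equivFin.symm j : ℕ)) with hn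
      have hnT : n ∈ T := (T.equivFin.symm j).2
      have hne : (R n).Nonempty := ⟨0, hRmem0 n hnT⟩
      obtain ⟨p, hp, hplt⟩ := exists_lt_of_lt_csSup hne
        (show rr n - η < sSup (R n) from sub_lt_self _ hηpos)
      obtain ⟨x, hx, y, hy, rfl⟩ := hp
      rcases le_total x y with hxy | hxy
      · exact ⟨(x, y), hx, hy, hxy, hplt⟩
      · exact ⟨(y, x), hy, hx, hxy, by rw [abs_sub_comm]; exact hplt⟩
    choose cd hcd1 hcd2 hcd3 hcd4 using hchoice
    set c : Fin k → ℝ := fun j => (cd j).1 with hcdef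
    set d : Fin k → ℝ := fun j => (cd j).2 with hddef
    have hinj : ∀ i j : Fin k, i ≠ j →
        ((T.equivFin.symm i : ℕ)) ≠ ((T.equivFin.symm j : ℕ)) := by
      intro i j hij hcon
      exact hij (T.equivFin.symm.injective (Subtype.ext hcon))
    -- C' is the full component when nonempty
    have hC'full : ∀ n : ℕ, (C' n).Nonempty → C' n = C n := by
      intro n hne
      by_cases h : ∃ m < n, C m = C n
      · exfalso
        have : C' n = ∅ := by simp only [hC']; exact if_pos h
        rw [this] at hne; exact Set.not_nonempty_empty hne
      · simp only [hC']; exact if_neg h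
    have hIcc : ∀ j : Fin k, Icc (c j) (d j) ⊆ C' ((T.equivFin.symm j : ℕ)) := by
      intro j
      set n := ((T.equivFin.symm j : ℕ))
      have hfull : C' n = C n := hC'full n ⟨c j, (hcd1 j).2⟩
      rw [hfull]
      have hoc : (C n).OrdConnected := isPreconnected_connectedComponentIn.ordConnected
      refine hoc.out ?_ ?_
      · exact hfull ▸ (hcd1 j).2
      · exact hfull ▸ (hcd2 j).2
    have hgood : GoodIntervals S c d := by
      constructor
      · exact fun j => ⟨(hcd1 j).1, (hcd2 j).1, hcd3 j⟩
      · intro i j hij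
        by_contra hcon
        push_neg at hcon
        obtain ⟨h1, h2⟩ := hcon
        set z := max (c i) (c j) with hz
        have hzi : z ∈ Icc (c i) (d i) := ⟨le_max_left _ _, max_le (hcd3 i) h1.le⟩
        have hzj : z ∈ Icc (c j) (d j) := ⟨le_max_right _ _, max_le h2.le (hcd3 j)⟩
        exact Set.disjoint_left.1
          ((hdisj _ _ (hinj i j hij)).mono (hIcc i) (hIcc j)) hzi hzj
    have hpdIcc : Pairwise (Function.onFun Disjoint fun j => Icc (c j) (d j)) := by
      intro i j hij
      exact (hdisj _ _ (hinj i j hij)).mono (hIcc i) (hIcc j)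
    have hUsub : (⋃ j, Icc (c j) (d j)) ⊆ U := fun z hz => by
      obtain ⟨j, hj⟩ := mem_iUnion.1 hz
      exact hC'U _ (hIcc j hj)
    have hlenEN : ∑ j : Fin k, ENNReal.ofReal (d j - c j) < ENNReal.ofReal δ := by
      have h1 : volume (⋃ j, Icc (c j) (d j)) = ∑ j : Fin k, ENNReal.ofReal (d j - c j) := by
        rw [measure_iUnion hpdIcc (fun j => measurableSet_Icc)]
        rw [tsum_fintype]
        congr 1; ext j; exact Real.volume_Icc
      calc ∑ j : Fin k, ENNReal.ofReal (d j - c j) = volume (⋃ j, Icc (c j) (d j)) := h1.symm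
        _ ≤ volume U := measure_mono hUsub
        _ < ENNReal.ofReal δ := hUvol
    have hlen : ∑ j : Fin k, (d j - c j) < δ := by
      have hnn : ∀ j ∈ Finset.univ (α := Fin k), (0:ℝ) ≤ d j - c j :=
        fun j _ => sub_nonneg.2 (hcd3 j)
      rw [← ENNReal.ofReal_lt_ofReal_iff_of_nonneg (Finset.sum_nonneg hnn),
        ENNReal.ofReal_sum_of_nonneg hnn]
      exact hlenEN
    have hsumabs : ∑ j : Fin k, |φ (d j) - φ (c j)| < ε / 8 := hACδ k c d hgood hlen
    -- assemble
    have hrrsum : ∑ j : Fin k, rr ((T.equivFin.symm j : ℕ)) ≤ ε/8 + k * η := by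
      have h1 : ∀ j : Fin k, rr ((T.equivFin.symm j : ℕ)) ≤ |φ (d j) - φ (c j)| + η := by
        intro j; linarith [hcd4 j]
      calc ∑ j : Fin k, rr ((T.equivFin.symm j : ℕ))
          ≤ ∑ j : Fin k, (|φ (d j) - φ (c j)| + η) := Finset.sum_le_sum fun j _ => h1 j
        _ = (∑ j : Fin k, |φ (d j) - φ (c j)|) + k * η := by
            rw [Finset.sum_add_distrib]; simp [mul_comm]
        _ ≤ ε/8 + k * η := by linarith [hsumabs]
    have hketa : (k : ℝ) * η ≤ ε / 8 := by
      rw [hη]; exact keta_aux k ε hε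
    calc ∑ n ∈ T, volume (φ '' (A ∩ C' n))
        ≤ ∑ n ∈ T, ENNReal.ofReal (2 * rr n) := Finset.sum_le_sum hstep1
      _ = ∑ j : Fin k, ENNReal.ofReal (2 * rr ((T.equivFin.symm j : ℕ))) := by
          rw [← Finset.sum_coe_sort T (fun n => ENNReal.ofReal (2 * rr n))]
          exact (Equiv.sum_comp T.equivFin.symm
            (fun a : T => ENNReal.ofReal (2 * rr (a : ℕ)))).symm
      _ = ENNReal.ofReal (∑ j : Fin k, 2 * rr ((T.equivFin.symm j : ℕ))) := by
          rw [ENNReal.ofReal_sum_of_nonneg]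
          intro j _
          have := hrr0 _ (T.equivFin.symm j).2
          linarith
      _ ≤ ENNReal.ofReal ε := by
          apply ENNReal.ofReal_le_ofReal
          rw [← Finset.mul_sum]
          calc 2 * ∑ j : Fin k, rr ((T.equivFin.symm j : ℕ)) ≤ 2 * (ε/8 + k*η) := by
                have := hrrsum; linarith
            _ ≤ 2 * (ε/8 + ε/8) := by linarith [hketa]
            _ ≤ ε := by linarith
  -- conclude
  refine ENNReal.le_of_forall_pos_le_add fun ν hν _ => ?_
  rw [zero_add]
  have := key (ν : ℝ) (by exact_mod_cast hν)
  rwa [ENNReal.ofReal_coe_nnreal] at this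

lemma lemB (φ : ℝ → ℝ) (ε : ℝ) (hε : 0 < ε) (E : Set ℝ)
    (hcont : ContinuousOn φ (Set.Icc 0 1))
    (hE : volume ((fun t => φ t - ε * t) '' E) = 0)
    (hD : ∀ t ∈ Set.Ico (0:ℝ) 1, t ∉ E → DlowR φ t ≤ 0) :
    φ 1 - φ 0 ≤ ε := by
  set ψ : ℝ → ℝ := fun t => φ t - ε * t with hψ
  have hψcont : ContinuousOn ψ (Icc 0 1) :=
    hcont.sub ((continuous_const.mul continuous_id).continuousOn)
  by_contra hlt
  push_neg at hlt
  have hψ01 : ψ 0 < ψ 1 := by simp only [hψ]; ring_nf; norm_num; linarith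
  have hsub : Ioo (ψ 0) (ψ 1) ⊆ ψ '' E := by
    intro c hc
    set T : Set ℝ := Icc 0 1 ∩ ψ ⁻¹' {c} with hTdef
    have hTne : T.Nonempty := by
      obtain ⟨t, ht, hψt⟩ := intermediate_value_Icc (zero_le_one) hψcont
        (show c ∈ Icc (ψ 0) (ψ 1) from ⟨hc.1.le, hc.2.le⟩)
      exact ⟨t, ht, hψt⟩
    have hTclosed : IsClosed T :=
      hψcont.preimage_isClosed_of_isClosed isClosed_Icc isClosed_singleton
    have hTcomp : IsCompact T :=
      isCompact_Icc.of_isClosed_subset hTclosed (inter_subset_left)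
    set b := sSup T with hb
    have hbT : b ∈ T := hTcomp.sSup_mem hTne
    have hb01 : b ∈ Icc (0:ℝ) 1 := hbT.1
    have hψb : ψ b = c := hbT.2
    have hbdd : BddAbove T := hTcomp.bddAbove
    have hb1 : b < 1 := by
      rcases hb01.2.lt_or_eq with h | h
      · exact h
      · exfalso; rw [h] at hψb; rw [hψb] at hc; exact lt_irrefl c hc.2
    have hkey : ∀ t, b < t → t ≤ 1 → c < ψ t := by
      intro t hbt ht1
      have ht0 : (0:ℝ) ≤ t := le_trans hb01.1 hbt.le
      rcases lt_trichotomy (ψ t) c with h | h | h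
      · exfalso
        obtain ⟨t', ht', hψt'⟩ := intermediate_value_Icc ht1
          (hψcont.mono (Icc_subset_Icc ht0 le_rfl))
          (show c ∈ Icc (ψ t) (ψ 1) from ⟨h.le, hc.2.le⟩)
        have : t' ∈ T := ⟨⟨le_trans ht0 ht'.1, ht'.2⟩, hψt'⟩
        have := le_csSup hbdd this
        linarith [ht'.1]
      · exfalso
        have : t ∈ T := ⟨⟨ht0, ht1⟩, h⟩
        have := le_csSup hbdd this
        linarith
      · exact h
    by_cases hbE : b ∈ E
    · exact ⟨b, hbE, hψb⟩
    · exfalso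
      have hD0 := hD b ⟨hb01.1, hb1⟩ hbE
      have hev : ∀ᶠ s in 𝓝[>] (0:ℝ),
          (↑ε : EReal) ≤ (((φ (b + s) - φ b) / s : ℝ) : EReal) := by
        have hmem : Ioc (0:ℝ) (1 - b) ∈ 𝓝[>] (0:ℝ) :=
          Ioc_mem_nhdsGT_of_mem ⟨le_rfl, by linarith⟩
        filter_upwards [hmem] with s hs
        have hs0 : 0 < s := hs.1
        have hlt : c < ψ (b + s) := hkey (b + s) (by linarith) (by linarith [hs.2])
        have : ε * s < φ (b + s) - φ b := by
          have : ψ b < ψ (b + s) := hψb ▸ hlt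
          simp only [hψ] at this
          nlinarith
        have : ε ≤ (φ (b + s) - φ b) / s := by
          rw [le_div_iff₀ hs0]; nlinarith
        exact_mod_cast EReal.coe_le_coe_iff.2 this
      have hge : (↑ε : EReal) ≤ DlowR φ b := by
        rw [DlowR]
        exact le_liminf_of_le (by isBoundedDefault) hev
      have : (↑ε : EReal) ≤ 0 := le_trans hge hD0
      have : ε ≤ 0 := by exact_mod_cast this
      linarith
  have hvol : volume (Ioo (ψ 0) (ψ 1)) = 0 :=
    measure_mono_null hsub hE
  rw [Real.volume_Ioo, ENNReal.ofReal_eq_zero] at hvol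
  linarith

lemma dlow_sub (f g : ℝ → ℝ) (t : ℝ) (h1 : DlowR g t ≠ ⊤) (h2 : DlowR g t ≠ ⊥)
    (h3 : DlowR f t ≤ DlowR g t) : DlowR (fun u => f u - g u) t ≤ 0 := by
  by_contra hpos
  push_neg at hpos
  set D := DlowR g t with hD
  lift D to ℝ using ⟨h1, h2⟩ with L hL
  obtain ⟨a, ha0, haD⟩ := EReal.exists_between_coe_real hpos
  have ha0' : (0:ℝ) < a := by exact_mod_cast ha0
  have hev1 : ∀ᶠ s in 𝓝[>] (0:ℝ),
      (↑a : EReal) < ((((f (t+s) - g (t+s)) - (f t - g t)) / s : ℝ) : EReal) := by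
    rw [DlowR] at haD
    exact eventually_lt_of_lt_liminf haD
  have hev2 : ∀ᶠ s in 𝓝[>] (0:ℝ),
      (↑(L - a/2) : EReal) < (((g (t+s) - g t) / s : ℝ) : EReal) := by
    have : (↑(L - a/2) : EReal) < DlowR g t := by
      rw [← hD]
      exact_mod_cast EReal.coe_lt_coe_iff.2 (show L - a/2 < L by linarith)
    rw [DlowR] at this
    exact eventually_lt_of_lt_liminf this
  have hev : ∀ᶠ s in 𝓝[>] (0:ℝ),
      (↑(a + (L - a/2)) : EReal) ≤ (((f (t+s) - f t) / s : ℝ) : EReal) := by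
    filter_upwards [hev1, hev2] with s hs1 hs2
    have hs1' : a < ((f (t+s) - g (t+s)) - (f t - g t)) / s := by exact_mod_cast hs1
    have hs2' : L - a/2 < (g (t+s) - g t) / s := by exact_mod_cast hs2
    have hid : (f (t+s) - f t) / s =
        ((f (t+s) - g (t+s)) - (f t - g t)) / s + (g (t+s) - g t) / s := by
      rw [← add_div]; ring_nf
    have : a + (L - a/2) ≤ (f (t+s) - f t) / s := by rw [hid]; linarith
    exact_mod_cast EReal.coe_le_coe_iff.2 this
  have hgef : (↑(a + (L - a/2)) : EReal) ≤ DlowR f t := by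
    rw [DlowR]
    exact le_liminf_of_le (by isBoundedDefault) hev
  have hfinal : (↑(a + (L - a/2)) : EReal) ≤ (↑L : EReal) := le_trans hgef h3
  have : a + (L - a/2) ≤ L := EReal.coe_le_coe_iff.1 hfinal
  linarith

/-- One-dimensional core of the subdifferential determination theorem in the
ACG class: if `g` is ACG* on `[0,1]` with `D₊g = h` a.e. for an HK-integrable
`h`, `f` is ACG on `[0,1]`, and for almost all `t ∈ [0,1]` the derivative
`D₊g(t)` is finite and `D₊f(t) ≤ D₊g(t)`, then `f(1) - f(0) ≤ g(1) - g(0)`. -/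
theorem stmt19 (f g h : ℝ → ℝ)
    (hg : FnACGstar g 0 1)
    (hgh : ∀ᵐ t ∂(MeasureTheory.volume.restrict (Set.Icc (0:ℝ) 1)),
      DlowR g t = ((h t : ℝ) : EReal))
    (hhk : ∃ I : ℝ, HasHKIntegral h 0 1 I)
    (hf : FnACG f 0 1)
    (hle : ∀ᵐ t ∂(MeasureTheory.volume.restrict (Set.Icc (0:ℝ) 1)),
      DlowR g t ≠ ⊤ ∧ DlowR g t ≠ ⊥ ∧ DlowR f t ≤ DlowR g t) :
    f 1 - f 0 ≤ g 1 - g 0 := by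
  obtain ⟨hgc, Sg, hSgU, hSgstar⟩ := hg
  obtain ⟨hfc, Sf, hSfU, hSfAC⟩ := hf
  have hSgsub : ∀ n, Sg n ⊆ Icc (0:ℝ) 1 := fun n => hSgU ▸ subset_iUnion Sg n
  have hSfsub : ∀ m, Sf m ⊆ Icc (0:ℝ) 1 := fun m => hSfU ▸ subset_iUnion Sf m
  obtain ⟨Mg, hMg⟩ := isCompact_Icc.exists_bound_of_continuousOn hgc
  have hgAC : ∀ n, FnAC g (Sg n) := by
    intro n ε' hε'
    obtain ⟨δ, hδ, hstar⟩ := hSgstar n ε' hε'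
    refine ⟨δ, hδ, fun m c d hgood hsum => ?_⟩
    refine lt_of_le_of_lt (Finset.sum_le_sum fun i _ => ?_) (hstar m c d hgood hsum)
    obtain ⟨hc, hd, hcd⟩ := hgood.1 i
    have hc01 := hSgsub n hc; have hd01 := hSgsub n hd
    refine le_csSup ⟨|Mg| + |Mg|, ?_⟩ ⟨c i, d i, le_rfl, hcd, le_rfl, rfl⟩
    rintro r ⟨x, y, hcx, hxy, hyd, rfl⟩
    have hx : x ∈ Icc (0:ℝ) 1 := ⟨le_trans hc01.1 hcx, le_trans (hxy.trans hyd) hd01.2⟩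
    have hy : y ∈ Icc (0:ℝ) 1 := ⟨le_trans hc01.1 (hcx.trans hxy), le_trans hyd hd01.2⟩
    have hgx : |g x| ≤ Mg := by rw [← Real.norm_eq_abs]; exact hMg x hx
    have hgy : |g y| ≤ Mg := by rw [← Real.norm_eq_abs]; exact hMg y hy
    calc |g y - g x| ≤ |g y| + |g x| := abs_sub _ _
      _ ≤ |Mg| + |Mg| := add_le_add (hgy.trans (le_abs_self _)) (hgx.trans (le_abs_self _))
  set φ : ℝ → ℝ := fun t => f t - g t with hφdef
  have hφcont : ContinuousOn φ (Icc 0 1) := hfc.sub hgc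
  have hae : ∀ᵐ t ∂(volume.restrict (Icc (0:ℝ) 1)), DlowR φ t ≤ 0 := by
    filter_upwards [hle] with t ht
    exact dlow_sub f g t ht.1 ht.2.1 ht.2.2
  have hbadnull : volume.restrict (Icc (0:ℝ) 1) {t | ¬ DlowR φ t ≤ 0} = 0 := ae_iff.1 hae
  obtain ⟨N, hNsup, hNmeas, hNnull⟩ := exists_measurable_superset_of_null hbadnull
  have hE0null : volume (N ∩ Icc (0:ℝ) 1) = 0 := by
    rwa [Measure.restrict_apply hNmeas] at hNnull
  set E₀ : Set ℝ := N ∩ Icc (0:ℝ) 1 with hE₀def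
  have hE₀sub : E₀ ⊆ Icc (0:ℝ) 1 := inter_subset_right
  have hfin : ∀ ε : ℝ, 0 < ε → φ 1 - φ 0 ≤ ε := by
    intro ε hε
    set ψ : ℝ → ℝ := fun t => φ t - ε * t with hψdef
    have hψcont : ContinuousOn ψ (Icc 0 1) :=
      hφcont.sub ((continuous_const.mul continuous_id).continuousOn)
    obtain ⟨Mψ, hMψ⟩ := isCompact_Icc.exists_bound_of_continuousOn hψcont
    have hψAC : ∀ p : ℕ × ℕ, FnAC ψ (Sf p.1 ∩ Sg p.2) := by
      rintro ⟨m, n⟩ ε' hε'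
      obtain ⟨δf, hδf, hf'⟩ := hSfAC m (ε'/3) (by positivity)
      obtain ⟨δg, hδg, hg'⟩ := hgAC n (ε'/3) (by positivity)
      refine ⟨min (min δf δg) (ε'/(3*ε)), by positivity, fun q c d hgood hsum => ?_⟩
      have hgoodf : GoodIntervals (Sf m) c d :=
        ⟨fun i => ⟨(hgood.1 i).1.1, (hgood.1 i).2.1.1, (hgood.1 i).2.2⟩, hgood.2⟩
      have hgoodg : GoodIntervals (Sg n) c d :=
        ⟨fun i => ⟨(hgood.1 i).1.2, (hgood.1 i).2.1.2, (hgood.1 i).2.2⟩, hgood.2⟩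
      have hsf := hf' q c d hgoodf
        (lt_of_lt_of_le hsum ((min_le_left _ _).trans (min_le_left _ _)))
      have hsg := hg' q c d hgoodg
        (lt_of_lt_of_le hsum ((min_le_left _ _).trans (min_le_right _ _)))
      have hsumlen : ∑ i, (d i - c i) < ε'/(3*ε) :=
        lt_of_lt_of_le hsum (min_le_right _ _)
      have step : ∑ i, |ψ (d i) - ψ (c i)| ≤
          (∑ i, |f (d i) - f (c i)|) + (∑ i, |g (d i) - g (c i)|) + ε * ∑ i, (d i - c i) := by
        have hptwise : ∀ i ∈ Finset.univ (α := Fin q), |ψ (d i) - ψ (c i)| ≤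
            |f (d i) - f (c i)| + |g (d i) - g (c i)| + ε * (d i - c i) := by
          intro i _
          have hcd := (hgood.1 i).2.2
          have hrw : ψ (d i) - ψ (c i) =
              (f (d i) - f (c i)) - (g (d i) - g (c i)) - ε * (d i - c i) := by
            simp only [hψdef, hφdef]; ring
          rw [hrw]
          have h1 : |(f (d i) - f (c i)) - (g (d i) - g (c i)) - ε * (d i - c i)| ≤
              |f (d i) - f (c i)| + |g (d i) - g (c i)| + |ε * (d i - c i)| := by
            calc _ ≤ |(f (d i) - f (c i)) - (g (d i) - g (c i))| + |ε * (d i - c i)| :=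
                abs_sub _ _
              _ ≤ _ := by gcongr; exact abs_sub _ _
          have h2 : |ε * (d i - c i)| = ε * (d i - c i) :=
            abs_of_nonneg (mul_nonneg hε.le (by linarith))
          rw [h2] at h1
          linarith
        calc ∑ i, |ψ (d i) - ψ (c i)|
            ≤ ∑ i, (|f (d i) - f (c i)| + |g (d i) - g (c i)| + ε * (d i - c i)) :=
              Finset.sum_le_sum hptwise
          _ = _ := by rw [Finset.sum_add_distrib, Finset.sum_add_distrib, ← Finset.mul_sum]
      have hεne : (ε:ℝ) ≠ 0 := ne_of_gt hε
      have hmul : ε * (ε'/(3*ε)) = ε'/3 := by field_simp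
      have hsum0 : (0:ℝ) ≤ ∑ i, (d i - c i) :=
        Finset.sum_nonneg fun i _ => by linarith [(hgood.1 i).2.2]
      calc ∑ i, |ψ (d i) - ψ (c i)| ≤ _ := step
        _ < ε'/3 + ε'/3 + ε * (ε'/(3*ε)) := by
            have : ε * ∑ i, (d i - c i) ≤ ε * (ε'/(3*ε)) :=
              mul_le_mul_of_nonneg_left hsumlen.le hε.le
            linarith
        _ = ε' := by rw [hmul]; ring
    have hψE : volume (ψ '' E₀) = 0 := by
      have hcov : ψ '' E₀ ⊆ ⋃ p : ℕ × ℕ, ψ '' (E₀ ∩ (Sf p.1 ∩ Sg p.2)) := by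
        rintro _ ⟨t, ht, rfl⟩
        have ht01 := hE₀sub ht
        have htf : t ∈ ⋃ m, Sf m := hSfU ▸ ht01
        have htg : t ∈ ⋃ n, Sg n := hSgU ▸ ht01
        obtain ⟨m, hm⟩ := mem_iUnion.1 htf
        obtain ⟨n, hn⟩ := mem_iUnion.1 htg
        exact mem_iUnion.2 ⟨(m, n), ⟨t, ⟨ht, hm, hn⟩, rfl⟩⟩
      refine measure_mono_null hcov (measure_iUnion_null fun p => ?_)
      refine lusinN ψ (Sf p.1 ∩ Sg p.2) _ Mψ ?_ (hψAC p) inter_subset_right ?_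
      · intro x hx; rw [← Real.norm_eq_abs]; exact hMψ x (hSfsub p.1 hx.1)
      · exact measure_mono_null inter_subset_left hE0null
    have hD' : ∀ t ∈ Ico (0:ℝ) 1, t ∉ E₀ → DlowR φ t ≤ 0 := by
      intro t ht htE
      by_contra hcon
      exact htE ⟨hNsup hcon, Ico_subset_Icc_self ht⟩
    exact lemB φ ε hε E₀ hφcont hψE hD'
  by_contra hcon
  push_neg at hcon
  have h1 : φ 1 - φ 0 = f 1 - f 0 - (g 1 - g 0) := by simp only [hφdef]; ring
  have := hfin ((f 1 - f 0 - (g 1 - g 0))/2) (by linarith)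
  rw [h1] at this
  linarith
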